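/- Let G be a locally compact group, X and Ξ G-spaces with G-invariant measures, Y a separable Hilbert space with a unitary representation μ : G → U(Y), and φ, ψ : X × Ξ → Y joint-G-equivariant feature maps. Define S_φ[γ](x) := ∫_Ξ γ(ξ) φ(x,ξ) dξ (Bochner integral), R_ψ[f](ξ) := ∫_X ⟨f(x), ψ(x,ξ)⟩_Y dx, and the unitary representation π_g[f](x) := μ_g(f(g⁻¹·x)) on L²(X;Y). Assume (1) the composite operator T := S_φ ∘ R_ψ : L²(X;Y) → L²(X;Y) is a well-defined bounded linear operator, and (2) π is irreducible. Then there exists a constant C ∈ ℂ such that for every f ∈ L²(X;Y), S_φ[R_ψ[f]] = C · f. -/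

import Mathlib

open MeasureTheory

section SchurHelpers
open ContinuousLinearMap
variable {H : Type*} [NormedAddCommGroup H] [InnerProductSpace ℂ H] [CompleteSpace H]

noncomputable def conjSAH (U : H ≃ₗᵢ[ℂ] H) : (H →L[ℂ] H) →⋆ₐ[ℂ] (H →L[ℂ] H) where
  toFun A := (U : H →L[ℂ] H) ∘L A ∘L (U.symm : H →L[ℂ] H)
  map_one' := by ext x; simp
  map_mul' A B := by ext x; simp
  map_zero' := by ext x; simp
  map_add' A B := by ext x; simp [comp_apply]
  commutes' c := by ext x; simp [ContinuousLinearMap.algebraMap_apply]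
  map_star' A := by
    simp only [star_eq_adjoint, adjoint_comp, LinearIsometryEquiv.adjoint_eq_symm,
      LinearIsometryEquiv.symm_symm, comp_assoc]

lemma conjSAH_cont (U : H ≃ₗᵢ[ℂ] H) : Continuous (conjSAH U) := by
  have h1 := (ContinuousLinearMap.compL ℂ H H H (U : H →L[ℂ] H)).continuous
  have h2 := ((ContinuousLinearMap.compL ℂ H H H).flip (U.symm : H →L[ℂ] H)).continuous
  exact h1.comp h2

lemma schur_selfadjoint {ι : Type*} (U : ι → (H ≃ₗᵢ[ℂ] H))
    (hirr : ∀ V : Submodule ℂ H, IsClosed (V : Set H) →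
      (∀ i (v : H), v ∈ V → U i v ∈ V) → V = ⊥ ∨ V = ⊤)
    (A : H →L[ℂ] H) (hA : IsSelfAdjoint A)
    (hcomm : ∀ i, (U i : H →L[ℂ] H) ∘L A = A ∘L (U i : H →L[ℂ] H)) :
    ∃ c : ℝ, ∀ v : H, A v = (c : ℂ) • v := by
  rcases subsingleton_or_nontrivial H with hH | hH
  · exact ⟨0, fun v => Subsingleton.elim _ _⟩
  have hnt : Nontrivial (H →L[ℂ] H) := by
    obtain ⟨x, hx⟩ := exists_ne (0 : H)
    refine ⟨1, 0, fun h => hx ?_⟩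
    simpa using ContinuousLinearMap.ext_iff.mp h x
  -- conjugation fixes A
  have hfix : ∀ i, conjSAH (U i) A = A := by
    intro i
    show (U i : H →L[ℂ] H) ∘L A ∘L ((U i).symm : H →L[ℂ] H) = A
    rw [← comp_assoc, hcomm i, comp_assoc]
    ext v; simp
  -- cfc of A commutes with each U i
  have hcfc : ∀ (f : ℝ → ℝ), Continuous f → ∀ i (v : H),
      U i (cfc f A v) = cfc f A (U i v) := by
    intro f hf i v
    have h1 : conjSAH (U i) (cfc f A) = cfc f (conjSAH (U i) A) :=
      StarAlgHomClass.map_cfc (conjSAH (U i)) f A (hf.continuousOn) (conjSAH_cont (U i))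
        hA (by rw [hfix i]; exact hA)
    rw [hfix i] at h1
    have h2 : (U i : H →L[ℂ] H) ∘L (cfc f A) = cfc f A ∘L (U i : H →L[ℂ] H) := by
      conv_rhs => rw [← h1]
      show _ = (_ ∘L _ ∘L _) ∘L _
      ext w; simp
    exact ContinuousLinearMap.ext_iff.mp h2 v
  -- spectrum is a subsingleton
  have hsub : (spectrum ℝ A).Subsingleton := by
    intro a ha b hb
    by_contra hab
    set ε : ℝ := |a - b| / 2 with hε
    have hεpos : 0 < ε := by
      have : a - b ≠ 0 := sub_ne_zero.mpr hab
      positivity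
    set f : ℝ → ℝ := fun t => max (ε - |t - a|) 0 with hfdef
    set g : ℝ → ℝ := fun t => max (ε - |t - b|) 0 with hgdef
    have hfc : Continuous f := by fun_prop
    have hgc : Continuous g := by fun_prop
    have hdisj : ∀ t, f t * g t = 0 := by
      intro t
      rcases le_or_gt ε |t - a| with h | h
      · have : f t = 0 := max_eq_right (by linarith)
        rw [this, zero_mul]
      rcases le_or_gt ε |t - b| with h' | h'
      · have : g t = 0 := max_eq_right (by linarith)
        rw [this, mul_zero]
      exfalso
      have key : |a - b| ≤ |t - a| + |t - b| := by
        calc |a - b| = |(a - t) + (t - b)| := by ring_nf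
          _ ≤ |a - t| + |t - b| := abs_add_le _ _
          _ = |t - a| + |t - b| := by rw [abs_sub_comm]
      have : |a - b| = 2 * ε := by rw [hε]; ring
      linarith
    set P := cfc f A with hP
    set Q := cfc g A with hQ
    have hPne : P ≠ 0 := by
      intro h0
      have hmap : spectrum ℝ P = f '' spectrum ℝ A := cfc_map_spectrum f A hA hfc.continuousOn
      have : f a ∈ spectrum ℝ P := hmap ▸ Set.mem_image_of_mem f ha
      rw [h0] at this
      rw [spectrum.zero_eq] at this
      have hfa : f a = ε := by
        simp only [hfdef, sub_self, abs_zero, sub_zero]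
        exact max_eq_left hεpos.le
      rw [Set.mem_singleton_iff, hfa] at this
      exact hεpos.ne' this
    have hQne : Q ≠ 0 := by
      intro h0
      have hmap : spectrum ℝ Q = g '' spectrum ℝ A := cfc_map_spectrum g A hA hgc.continuousOn
      have : g b ∈ spectrum ℝ Q := hmap ▸ Set.mem_image_of_mem g hb
      rw [h0] at this
      rw [spectrum.zero_eq] at this
      have hgb : g b = ε := by
        simp only [hgdef, sub_self, abs_zero, sub_zero]
        exact max_eq_left hεpos.le
      rw [Set.mem_singleton_iff, hgb] at this
      exact hεpos.ne' this
    have hQP : Q * P = 0 := by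
      rw [hP, hQ, ← cfc_mul g f A hgc.continuousOn hfc.continuousOn]
      have : (fun x => g x * f x) = (fun _ : ℝ => (0 : ℝ)) := by
        funext t; rw [mul_comm]; exact hdisj t
      rw [this]
      simp
    -- closure of range of P is invariant
    set V : Submodule ℂ H := (LinearMap.range (P : H →ₗ[ℂ] H)).topologicalClosure with hV
    have hVclosed : IsClosed (V : Set H) := (LinearMap.range (P : H →ₗ[ℂ] H)).isClosed_topologicalClosure
    have hVinv : ∀ i (v : H), v ∈ V → U i v ∈ V := by
      intro i v hv
      have hmapsto : Set.MapsTo (U i) (LinearMap.range (P : H →ₗ[ℂ] H) : Set H)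
          (LinearMap.range (P : H →ₗ[ℂ] H) : Set H) := by
        rintro _ ⟨w, rfl⟩
        exact ⟨U i w, (hcfc f hfc i w).symm⟩
      have := hmapsto.closure (U i).continuous
      exact this hv
    rcases hirr V hVclosed hVinv with h | h
    · refine hPne (ContinuousLinearMap.ext fun v => ?_)
      have : P v ∈ V := (LinearMap.range (P : H →ₗ[ℂ] H)).le_topologicalClosure ⟨v, rfl⟩
      rw [h] at this
      simpa using this
    · refine hQne (ContinuousLinearMap.ext fun v => ?_)
      have hvV : v ∈ V := by rw [h]; trivial
      have hclosed : IsClosed {w : H | Q w = 0} := isClosed_eq Q.continuous continuous_const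
      have hsubset : (LinearMap.range (P : H →ₗ[ℂ] H) : Set H) ⊆ {w : H | Q w = 0} := by
        rintro _ ⟨w, rfl⟩
        show Q (P w) = 0
        have := ContinuousLinearMap.ext_iff.mp hQP w
        simpa [ContinuousLinearMap.mul_apply] using this
      have : (V : Set H) ⊆ {w : H | Q w = 0} := by
        rw [hV, Submodule.topologicalClosure_coe]
        exact hclosed.closure_subset_iff.mpr hsubset
      simpa using this hvV
  -- spectrum is nonempty
  have hne : (spectrum ℝ A).Nonempty := by
    have h1 : (spectrum ℂ A).Nonempty := spectrum.nonempty A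
    rw [← hA.spectrumRestricts.algebraMap_image] at h1
    exact h1.of_image
  obtain ⟨c, hc⟩ := hne
  refine ⟨c, fun v => ?_⟩
  have : A = algebraMap ℝ (H →L[ℂ] H) c := by
    conv_lhs => rw [← cfc_id ℝ A hA]
    rw [cfc_congr (f := (_root_.id : ℝ → ℝ)) (g := fun _ : ℝ => c) (fun x hx => hsub hx hc), cfc_const c A hA]
  rw [this]
  rw [IsScalarTower.algebraMap_apply ℝ ℂ (H →L[ℂ] H)]
  simp [ContinuousLinearMap.algebraMap_apply]

lemma schur_general {ι : Type*} (U : ι → (H ≃ₗᵢ[ℂ] H))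
    (hinv : ∀ i, ∃ j, U j = (U i).symm)
    (hirr : ∀ V : Submodule ℂ H, IsClosed (V : Set H) →
      (∀ i (v : H), v ∈ V → U i v ∈ V) → V = ⊥ ∨ V = ⊤)
    (T : H →L[ℂ] H)
    (hcomm : ∀ i, (U i : H →L[ℂ] H) ∘L T = T ∘L (U i : H →L[ℂ] H)) :
    ∃ C : ℂ, ∀ v : H, T v = C • v := by
  have hstar : ∀ i, (U i : H →L[ℂ] H) ∘L (star T) = star T ∘L (U i : H →L[ℂ] H) := by
    intro i
    obtain ⟨j, hj⟩ := hinv i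
    have h := hcomm j
    rw [hj] at h
    have h' := congrArg ContinuousLinearMap.adjoint h
    rw [adjoint_comp, adjoint_comp, LinearIsometryEquiv.adjoint_eq_symm,
      LinearIsometryEquiv.symm_symm] at h'
    rw [star_eq_adjoint]
    exact h'.symm
  set A₁ : H →L[ℂ] H := T + star T with hA₁def
  set A₂ : H →L[ℂ] H := Complex.I • (T - star T) with hA₂def
  have hA₁ : IsSelfAdjoint A₁ := by
    show star (T + star T) = T + star T
    rw [star_add, star_star, add_comm]
  have hA₂ : IsSelfAdjoint A₂ := by
    show star (Complex.I • (T - star T)) = Complex.I • (T - star T)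
    rw [star_smul, star_sub, star_star, Complex.star_def, Complex.conj_I, neg_smul,
      ← smul_neg, neg_sub]
  have hcomm₁ : ∀ i, (U i : H →L[ℂ] H) ∘L A₁ = A₁ ∘L (U i : H →L[ℂ] H) := by
    intro i
    rw [hA₁def, comp_add, add_comp, hcomm i, hstar i]
  have hcomm₂ : ∀ i, (U i : H →L[ℂ] H) ∘L A₂ = A₂ ∘L (U i : H →L[ℂ] H) := by
    intro i
    rw [hA₂def, comp_smul, smul_comp, comp_sub, sub_comp, hcomm i, hstar i]
  obtain ⟨c₁, hc₁⟩ := schur_selfadjoint U hirr A₁ hA₁ hcomm₁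
  obtain ⟨c₂, hc₂⟩ := schur_selfadjoint U hirr A₂ hA₂ hcomm₂
  refine ⟨(2⁻¹ : ℂ) * ((c₁ : ℂ) - Complex.I * c₂), fun v => ?_⟩
  have e1 : T v + star T v = (c₁ : ℂ) • v := by
    have := hc₁ v
    simpa [hA₁def] using this
  have e2 : Complex.I • (T v - star T v) = (c₂ : ℂ) • v := by
    have := hc₂ v
    simpa [hA₂def] using this
  have e2' : T v - star T v = (-(Complex.I) * c₂) • v := by
    have h3 := congrArg (fun w => (-Complex.I) • w) e2
    simp only [smul_smul] at h3
    have : -Complex.I * Complex.I = 1 := by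
      rw [neg_mul, Complex.I_mul_I, neg_neg]
    rwa [this, one_smul] at h3
  have h2 : (2 : ℂ) • T v = ((c₁ : ℂ) - Complex.I * c₂) • v := by
    rw [two_smul]
    calc T v + T v = (T v + star T v) + (T v - star T v) := by abel
      _ = (c₁ : ℂ) • v + (-(Complex.I) * c₂) • v := by rw [e1, e2']
      _ = ((c₁ : ℂ) - Complex.I * c₂) • v := by rw [← add_smul]; ring_nf
  calc T v = (2⁻¹ : ℂ) • ((2 : ℂ) • T v) := by rw [smul_smul]; norm_num
    _ = ((2⁻¹ : ℂ) * ((c₁ : ℂ) - Complex.I * c₂)) • v := by rw [h2, smul_smul]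

end SchurHelpers

/-- **Main reconstruction formula.** Let `G` be a locally compact group,
`X` and `Ξ` `G`-spaces with `G`-invariant measures, `Y` a separable Hilbert space with a
unitary representation `ρ : G → U(Y)`, and `φ, ψ : X × Ξ → Y` joint-`G`-equivariant
feature maps.  Assume the composite `T = S_φ ∘ R_ψ` of the joint-equivariant machine
`S_φ[γ](x) = ∫_Ξ γ(ξ) • φ(x,ξ) dξ` with the ridgelet transform
`R_ψ[f](ξ) = ∫_X ⟨f(x), ψ(x,ξ)⟩ dx` is a well-defined bounded linear operator on
`L²(X;Y)`, and that the unitary representation `π_g[f](x) = ρ_g (f (g⁻¹ • x))` on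
`L²(X;Y)` (here `Pi`, given with its action a.e.) is irreducible.  Then there is a
constant `C ∈ ℂ` with `S_φ[R_ψ[f]] = C • f` for every `f ∈ L²(X;Y)`. -/
theorem statement6
    {G X Ξ Y : Type*} [Group G] [TopologicalSpace G] [IsTopologicalGroup G]
    [LocallyCompactSpace G]
    [MeasurableSpace X] [MulAction G X]
    [MeasurableSpace Ξ] [MulAction G Ξ]
    (μX : Measure X) (μΞ : Measure Ξ)
    (hμX : ∀ g : G, MeasurePreserving (fun x : X => g • x) μX μX)
    (hμΞ : ∀ g : G, MeasurePreserving (fun ξ : Ξ => g • ξ) μΞ μΞ)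
    [NormedAddCommGroup Y] [InnerProductSpace ℂ Y] [CompleteSpace Y]
    [TopologicalSpace.SeparableSpace Y]
    (ρ : G →* (Y ≃ₗᵢ[ℂ] Y))
    (φ ψ : X → Ξ → Y)
    (hφ : ∀ (g : G) (x : X) (ξ : Ξ), φ (g • x) (g • ξ) = ρ g (φ x ξ))
    (hψ : ∀ (g : G) (x : X) (ξ : Ξ), ψ (g • x) (g • ξ) = ρ g (ψ x ξ))
    -- the composite operator `T = S_φ ∘ R_ψ` is a well-defined bounded linear operator
    (T : Lp Y 2 μX →L[ℂ] Lp Y 2 μX)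
    (hT : ∀ f : Lp Y 2 μX,
      ⇑(T f) =ᵐ[μX] fun x =>
        ∫ ξ, (∫ x', (inner ℂ (f x') (ψ x' ξ) : ℂ) ∂μX) • φ x ξ ∂μΞ)
    -- the unitary representation `π` of `G` on `L²(X;Y)`
    (Pi : G →* (Lp Y 2 μX ≃ₗᵢ[ℂ] Lp Y 2 μX))
    (hPi : ∀ (g : G) (f : Lp Y 2 μX),
      ⇑(Pi g f) =ᵐ[μX] fun x => ρ g (f (g⁻¹ • x)))
    -- irreducibility of `π`
    (hirr : ∀ V : Submodule ℂ (Lp Y 2 μX), IsClosed (V : Set (Lp Y 2 μX)) →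
      (∀ (g : G) (f : Lp Y 2 μX), f ∈ V → Pi g f ∈ V) → V = ⊥ ∨ V = ⊤) :
    ∃ C : ℂ, ∀ f : Lp Y 2 μX, T f = C • f := by
  -- measurable embeddings given by the group action
  have hembX : ∀ g : G, MeasurableEmbedding (fun x : X => g • x) := fun g =>
    MeasurableEquiv.measurableEmbedding
      { toEquiv := MulAction.toPerm g
        measurable_toFun := (hμX g).measurable
        measurable_invFun := (hμX g⁻¹).measurable }
  have hembΞ : ∀ g : G, MeasurableEmbedding (fun ξ : Ξ => g • ξ) := fun g =>
    MeasurableEquiv.measurableEmbedding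
      { toEquiv := MulAction.toPerm g
        measurable_toFun := (hμΞ g).measurable
        measurable_invFun := (hμΞ g⁻¹).measurable }
  have hintX : ∀ (g : G) (F : X → ℂ), ∫ x, F (g • x) ∂μX = ∫ x, F x ∂μX := fun g F =>
    (hμX g).integral_comp (hembX g) F
  have hintΞ : ∀ (g : G) (F : Ξ → Y), ∫ ξ, F (g • ξ) ∂μΞ = ∫ ξ, F ξ ∂μΞ := fun g F =>
    (hμΞ g).integral_comp (hembΞ g) F
  -- equivariance of the ridgelet transform
  have hR : ∀ (g : G) (f : Lp Y 2 μX) (ξ : Ξ),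
      (∫ x', (inner ℂ ((Pi g f) x') (ψ x' ξ) : ℂ) ∂μX)
        = ∫ x', (inner ℂ (f x') (ψ x' (g⁻¹ • ξ)) : ℂ) ∂μX := by
    intro g f ξ
    have step1 : (∫ x', (inner ℂ ((Pi g f) x') (ψ x' ξ) : ℂ) ∂μX)
        = ∫ x', (inner ℂ (ρ g (f (g⁻¹ • x'))) (ψ x' ξ) : ℂ) ∂μX :=
      integral_congr_ae ((hPi g f).mono fun x' hx' => by dsimp only; rw [hx'])
    have step2 : (∫ x', (inner ℂ (ρ g (f (g⁻¹ • x'))) (ψ x' ξ) : ℂ) ∂μX)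
        = ∫ x', (inner ℂ (ρ g (f (g⁻¹ • (g • x')))) (ψ (g • x') ξ) : ℂ) ∂μX :=
      (hintX g fun x' => (inner ℂ (ρ g (f (g⁻¹ • x'))) (ψ x' ξ) : ℂ)).symm
    rw [step1, step2]
    refine integral_congr_ae (Filter.Eventually.of_forall fun x' => ?_)
    dsimp only
    rw [inv_smul_smul]
    have hψ' : ψ (g • x') ξ = ρ g (ψ x' (g⁻¹ • ξ)) := by
      conv_lhs => rw [← smul_inv_smul g ξ]
      exact hψ g x' (g⁻¹ • ξ)
    rw [hψ', LinearIsometryEquiv.inner_map_map]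
  -- T commutes with the representation
  have hcomm : ∀ g : G, ((Pi g : Lp Y 2 μX ≃ₗᵢ[ℂ] Lp Y 2 μX) : Lp Y 2 μX →L[ℂ] Lp Y 2 μX) ∘L T
      = T ∘L ((Pi g : Lp Y 2 μX ≃ₗᵢ[ℂ] Lp Y 2 μX) : Lp Y 2 μX →L[ℂ] Lp Y 2 μX) := by
    intro g
    refine ContinuousLinearMap.ext fun f => ?_
    show (Pi g) (T f) = T ((Pi g) f)
    refine Lp.ext ?_
    have key : ⇑(Pi g (T f)) =ᵐ[μX]
        fun x => ∫ ξ, (∫ x', (inner ℂ (f x') (ψ x' (g⁻¹ • ξ)) : ℂ) ∂μX) • φ x ξ ∂μΞ := by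
      refine (hPi g (T f)).trans ?_
      have h1 := (hμX g⁻¹).quasiMeasurePreserving.ae_eq (hT f)
      refine h1.mono fun x hx => ?_
      simp only [Function.comp] at hx
      show ρ g ((T f) (g⁻¹ • x)) = _
      dsimp only
      rw [hx]
      have hpt : ∀ ξ : Ξ,
          ρ g ((∫ x', (inner ℂ (f x') (ψ x' ξ) : ℂ) ∂μX) • φ (g⁻¹ • x) ξ)
          = (fun ζ => (∫ x', (inner ℂ (f x') (ψ x' (g⁻¹ • ζ)) : ℂ) ∂μX) • φ x ζ) (g • ξ) := by
        intro ξ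
        show ρ g ((∫ x', (inner ℂ (f x') (ψ x' ξ) : ℂ) ∂μX) • φ (g⁻¹ • x) ξ)
          = (∫ x', (inner ℂ (f x') (ψ x' (g⁻¹ • (g • ξ))) : ℂ) ∂μX) • φ x (g • ξ)
        rw [inv_smul_smul, LinearIsometryEquiv.map_smul]
        have hφ' : ρ g (φ (g⁻¹ • x) ξ) = φ x (g • ξ) := by
          rw [← hφ g (g⁻¹ • x) ξ, smul_inv_smul]
        rw [hφ']
      calc ρ g (∫ ξ, (∫ x', (inner ℂ (f x') (ψ x' ξ) : ℂ) ∂μX) • φ (g⁻¹ • x) ξ ∂μΞ)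
          = ∫ ξ, ρ g ((∫ x', (inner ℂ (f x') (ψ x' ξ) : ℂ) ∂μX) • φ (g⁻¹ • x) ξ) ∂μΞ :=
            ((ρ g).toLinearIsometry.integral_comp_comm _).symm
        _ = ∫ ξ, (fun ζ => (∫ x', (inner ℂ (f x') (ψ x' (g⁻¹ • ζ)) : ℂ) ∂μX) • φ x ζ)
              (g • ξ) ∂μΞ := integral_congr_ae (Filter.Eventually.of_forall hpt)
        _ = ∫ ζ, (∫ x', (inner ℂ (f x') (ψ x' (g⁻¹ • ζ)) : ℂ) ∂μX) • φ x ζ ∂μΞ :=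
            hintΞ g (fun ζ => (∫ x', (inner ℂ (f x') (ψ x' (g⁻¹ • ζ)) : ℂ) ∂μX) • φ x ζ)
    refine key.trans ?_
    have h2 : ⇑(T (Pi g f)) =ᵐ[μX]
        fun x => ∫ ξ, (∫ x', (inner ℂ (f x') (ψ x' (g⁻¹ • ξ)) : ℂ) ∂μX) • φ x ξ ∂μΞ := by
      refine (hT (Pi g f)).trans (Filter.Eventually.of_forall fun x => ?_)
      dsimp only
      refine integral_congr_ae (Filter.Eventually.of_forall fun ξ => ?_)
      dsimp only
      rw [hR g f ξ]
    exact h2.symm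
  -- apply Schur's lemma
  have hinv : ∀ g : G, ∃ h : G, Pi h = (Pi g).symm := by
    intro g
    refine ⟨g⁻¹, ?_⟩
    rw [map_inv]
    rfl
  obtain ⟨C, hC⟩ := schur_general (fun g : G => Pi g) hinv hirr T hcomm
  exact ⟨C, hC⟩
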